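/- Fix integers n ≥ T ≥ 1. Let f : Fin T → ℝ be a filter, let a : ZMod n → ℂ be its zero-padding (a(m) = f(m) for m < T and a(m) = 0 otherwise), and let A be the n × n circulant matrix with entries A_{jk} = a(j − k). For j ∈ ZMod n let w_j : ZMod n → ℂ be the normalized discrete Fourier vector w_j(k) = n^{−1/2} · exp(2πi · j·k / n) (indices taken via their representatives in {0,…,n−1}). Then for every j ∈ ZMod n, the squared Euclidean norm of the matrix-vector product satisfies ‖A · w_j‖₂² = c₀ + 2·Σ_{i=1}^{T−1} c_i · cos(2π·j·i/n), where c_i := Σ_{k=0}^{T−1−i} f_k · f_{k+i} for 0 ≤ i ≤ T−1. -/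

import Mathlib

open Finset Real

private lemma regroup' (T : ℕ) (F : ℕ → ℝ) (G : ℤ → ℝ) (hG : ∀ d, G (-d) = G d) :
    ∑ p ∈ range T, ∑ q ∈ range T, F p * F q * G ((p : ℤ) - q)
      = (∑ k ∈ range T, F k * F k) * G 0
        + 2 * ∑ i ∈ Icc 1 (T - 1), (∑ k ∈ range (T - i), F k * F (k + i)) * G i := by
  induction T with
  | zero => simp
  | succ T ih =>
    rw [Finset.sum_range_succ]
    conv_lhs => rw [Finset.sum_congr rfl (fun p _ => Finset.sum_range_succ
      (fun q => F p * F q * G ((p : ℤ) - q)) T)]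
    rw [Finset.sum_add_distrib, ih, Finset.sum_range_succ]
    have key : ∑ p ∈ range T, F p * F T * G ((p : ℤ) - T)
        = ∑ q ∈ range T, F T * F q * G ((T : ℤ) - q) := by
      refine Finset.sum_congr rfl fun p hp => ?_
      rw [← hG ((T : ℤ) - p)]; ring_nf
    rw [key]
    have hsub : (T + 1) - 1 = T := rfl
    rw [hsub]
    -- split the new correlation sum
    have hsplit : ∑ i ∈ Icc 1 T, (∑ k ∈ range (T + 1 - i), F k * F (k + i)) * G i
        = ∑ i ∈ Icc 1 (T - 1), (∑ k ∈ range (T - i), F k * F (k + i)) * G i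
          + ∑ q ∈ range T, F T * F q * G ((T : ℤ) - q) := by
      rcases Nat.eq_zero_or_pos T with hT0 | hT0
      · subst hT0; simp
      have h1 : ∀ i ∈ Icc 1 T, (∑ k ∈ range (T + 1 - i), F k * F (k + i)) * G i
          = (∑ k ∈ range (T - i), F k * F (k + i)) * G i + F (T - i) * F T * G i := by
        intro i hi
        rw [Finset.mem_Icc] at hi
        have : T + 1 - i = (T - i) + 1 := by omega
        rw [this, Finset.sum_range_succ]
        have : T - i + i = T := by omega
        rw [this]; ring
      rw [Finset.sum_congr rfl h1, Finset.sum_add_distrib]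
      congr 1
      · -- extend Icc 1 (T-1) to Icc 1 T: top term is 0
        have hT : T = (T - 1) + 1 := by omega
        rw [hT, Finset.sum_Icc_succ_top (by omega)]
        rw [← hT]
        have : T - T = 0 := by omega
        rw [this]
        simp
      · -- reindex i ↦ T - i
        refine Finset.sum_nbij' (fun i => T - i) (fun q => T - q) ?_ ?_ ?_ ?_ ?_
        · intro i hi; rw [Finset.mem_Icc] at hi; simp only [Finset.mem_range]; omega
        · intro q hq; rw [Finset.mem_range] at hq; simp only [Finset.mem_Icc]; omega
        · intro i hi; rw [Finset.mem_Icc] at hi; omega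
        · intro q hq; rw [Finset.mem_range] at hq; omega
        · intro i hi; rw [Finset.mem_Icc] at hi
          have h2 : ((T : ℤ)) - ((T - i : ℕ) : ℤ) = i := by
            have : ((T - i : ℕ) : ℤ) = (T : ℤ) - i := by omega
            omega
          rw [h2]; ring
    rw [hsplit, Finset.sum_range_succ (fun k => F k * F k), sub_self]
    ring

/-- **Squared-singular-value formula.** For the circulant matrix `A` of the zero-padded filter
`f` (length `T`, input length `n`) and the normalized Fourier vector `w j`, the squared Euclidean
norm of `A · w j` equals `c₀ + 2 ∑_{i=1}^{T-1} cᵢ cos(2πji/n)`, where `cᵢ` are the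
autocorrelations of `f`. -/
theorem circulant_mulVec_fourier_sq_norm (n T : ℕ) [NeZero n] (hT : 1 ≤ T) (hn : T ≤ n)
    (f : Fin T → ℝ)
    (F : ℕ → ℝ) (hF : ∀ m (h : m < T), F m = f ⟨m, h⟩) (hF0 : ∀ m, T ≤ m → F m = 0)
    (c : ℕ → ℝ) (hc : ∀ i ≤ T - 1, c i = ∑ k ∈ Finset.range (T - i), F k * F (k + i))
    (a : ZMod n → ℂ)
    (ha : ∀ m : ZMod n, a m = if h : m.val < T then (f ⟨m.val, h⟩ : ℂ) else 0)
    (A : Matrix (ZMod n) (ZMod n) ℂ) (hA : ∀ j k : ZMod n, A j k = a (j - k))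
    (w : ZMod n → ZMod n → ℂ)
    (hw : ∀ j k : ZMod n, w j k =
      (Real.sqrt n : ℂ)⁻¹ * Complex.exp (2 * π * Complex.I * (j.val * k.val) / n)) :
    ∀ j : ZMod n,
      ∑ k, ‖A.mulVec (w j) k‖ ^ 2 =
        c 0 + 2 * ∑ i ∈ Finset.Icc 1 (T - 1),
          c i * Real.cos (2 * π * j.val * i / n) := by
  intro j
  have hn0 : (n : ℝ) ≠ 0 := Nat.cast_ne_zero.2 (NeZero.ne n)
  set ζ : ℂ := Complex.exp (2 * π * Complex.I / n) with hζdef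
  have hζ' : ζ = Complex.exp (((2 * π / n : ℝ) : ℂ) * Complex.I) := by
    rw [hζdef]; congr 1; push_cast; ring
  have hζn : ζ ^ n = 1 := by
    rw [hζdef, ← Complex.exp_nat_mul]
    have hnc : (n : ℂ) ≠ 0 := Nat.cast_ne_zero.2 (NeZero.ne n)
    have h : (n : ℂ) * (2 * π * Complex.I / n) = 2 * π * Complex.I := by
      field_simp
    rw [h, Complex.exp_two_pi_mul_I]
  have hζmod : ∀ m : ℕ, ζ ^ m = ζ ^ (m % n) := by
    intro m
    conv_lhs => rw [← Nat.div_add_mod m n]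
    rw [pow_add, pow_mul, hζn, one_pow, one_mul]
  have hζpow : ∀ m : ℕ, ζ ^ m = Complex.exp (((2 * π * m / n : ℝ) : ℂ) * Complex.I) := by
    intro m; rw [hζ', ← Complex.exp_nat_mul]; congr 1; push_cast; ring
  have habs : ∀ m : ℕ, ‖ζ ^ m‖ = 1 := by
    intro m; rw [hζpow]; exact Complex.norm_exp_ofReal_mul_I _
  have hζne : ∀ m : ℕ, ζ ^ m ≠ 0 := by
    intro m; rw [hζdef]; exact pow_ne_zero _ (Complex.exp_ne_zero _)
  have hwζ : ∀ k : ZMod n, w j k = (Real.sqrt n : ℂ)⁻¹ * ζ ^ (j.val * k.val) := by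
    intro k; rw [hw, hζdef, ← Complex.exp_nat_mul]; congr 1; push_cast; ring
  have hconjmul : ∀ m : ℕ, (starRingEnd ℂ) (ζ ^ m) * ζ ^ m = 1 := by
    intro m
    rw [mul_comm, Complex.mul_conj]
    norm_cast
    rw [← Complex.sq_norm, habs, one_pow]
  -- eigenvector identity
  set μ : ℂ := ∑ m : ZMod n, a m * (starRingEnd ℂ) (ζ ^ (j.val * m.val)) with hμdef
  have heig : ∀ k : ZMod n, A.mulVec (w j) k = μ * w j k := by
    intro k
    have h1 : A.mulVec (w j) k = ∑ l, a (k - l) * w j l := by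
      simp only [Matrix.mulVec, dotProduct, hA]
    rw [h1]
    rw [← Fintype.sum_equiv (Equiv.subLeft k)
      (fun m => a m * (starRingEnd ℂ) (ζ ^ (j.val * m.val)) * w j k)
      (fun l => a (k - l) * w j l) ?_]
    · rw [hμdef, Finset.sum_mul]
    intro m
    simp only [Equiv.subLeft_apply, sub_sub_cancel]
    -- need: a m * conj(ζ^(j m)) * w j k = a m * w j (k - m)
    have hw1 : w j (k - m) = (starRingEnd ℂ) (ζ ^ (j.val * m.val)) * w j k := by
      rw [hwζ, hwζ]
      have hkey : ζ ^ (j.val * (k - m).val) * ζ ^ (j.val * m.val) = ζ ^ (j.val * k.val) := by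
        rw [← pow_add, ← Nat.mul_add]
        rw [hζmod (j.val * ((k - m).val + m.val)), hζmod (j.val * k.val)]
        congr 1
        have hmod : ((k - m).val + m.val) % n = k.val % n := by
          have h := ZMod.val_add (k - m) m
          rw [sub_add_cancel] at h
          rw [← h]
          exact (Nat.mod_eq_of_lt (ZMod.val_lt k)).symm
        calc j.val * ((k - m).val + m.val) % n
            = j.val % n * (((k - m).val + m.val) % n) % n := by
              rw [Nat.mul_mod]
          _ = j.val % n * (k.val % n) % n := by rw [hmod]
          _ = j.val * k.val % n := by rw [← Nat.mul_mod]
      have h2 : (starRingEnd ℂ) (ζ ^ (j.val * m.val)) * ζ ^ (j.val * m.val) = 1 :=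
        hconjmul _
      apply mul_right_cancel₀ (hζne (j.val * m.val))
      calc (Real.sqrt n : ℂ)⁻¹ * ζ ^ (j.val * (k - m).val) * ζ ^ (j.val * m.val)
          = (Real.sqrt n : ℂ)⁻¹ * (ζ ^ (j.val * (k - m).val) * ζ ^ (j.val * m.val)) := by ring
        _ = (Real.sqrt n : ℂ)⁻¹ * ζ ^ (j.val * k.val) := by rw [hkey]
        _ = (starRingEnd ℂ) (ζ ^ (j.val * m.val)) * ((Real.sqrt n:ℂ)⁻¹ * ζ ^ (j.val * k.val))
            * ζ ^ (j.val * m.val) := by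
            rw [show (starRingEnd ℂ) (ζ ^ (j.val * m.val)) * ((Real.sqrt n:ℂ)⁻¹ * ζ ^ (j.val * k.val))
              * ζ ^ (j.val * m.val) = ((starRingEnd ℂ) (ζ ^ (j.val * m.val)) * ζ ^ (j.val * m.val))
              * ((Real.sqrt n:ℂ)⁻¹ * ζ ^ (j.val * k.val)) by ring, h2, one_mul]
      done
    rw [hw1]; ring
  -- squared norm of the product
  have hsum : ∑ k, ‖A.mulVec (w j) k‖ ^ 2 = ‖μ‖ ^ 2 := by
    have h1 : ∀ k : ZMod n, ‖A.mulVec (w j) k‖ ^ 2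
        = ‖μ‖ ^ 2 * (n : ℝ)⁻¹ := by
      intro k
      rw [heig, norm_mul, hwζ, norm_mul, norm_inv, habs, mul_one, mul_pow]
      congr 1
      rw [Complex.norm_real, Real.norm_eq_abs, abs_of_nonneg (Real.sqrt_nonneg _),
        inv_pow, Real.sq_sqrt (Nat.cast_nonneg n)]
    rw [Finset.sum_congr rfl (fun k _ => h1 k), Finset.sum_const, Finset.card_univ,
      ZMod.card, nsmul_eq_mul]
    field_simp
  -- μ as a sum over range T
  have hμT : μ = ∑ p ∈ range T, (F p : ℂ) * (starRingEnd ℂ) (ζ ^ (j.val * p)) := by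
    have h1 : μ = ∑ p ∈ range n, (if h : p < T then ((f ⟨p, h⟩ : ℝ) : ℂ) else 0)
        * (starRingEnd ℂ) (ζ ^ (j.val * p)) := by
      rw [hμdef]
      refine Finset.sum_nbij' (fun m => m.val) (fun p => (p : ZMod n)) ?_ ?_ ?_ ?_ ?_
      · intro m _; exact Finset.mem_range.2 (ZMod.val_lt m)
      · intro p _; exact Finset.mem_univ _
      · intro m _; exact ZMod.natCast_rightInverse m
      · intro p hp; exact ZMod.val_cast_of_lt (Finset.mem_range.1 hp)
      · intro m _
        rw [ha]
    rw [h1, ← Finset.sum_subset (Finset.range_subset_range.2 hn) ?_]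
    · refine Finset.sum_congr rfl fun p hp => ?_
      rw [Finset.mem_range] at hp
      rw [dif_pos hp, hF p hp]
    · intro p _ hp
      rw [Finset.mem_range, not_lt] at hp
      rw [dif_neg (by omega), zero_mul]
  -- conjugate
  have hconjμ : (starRingEnd ℂ) μ = ∑ q ∈ range T, (F q : ℂ) * ζ ^ (j.val * q) := by
    rw [hμT, map_sum]
    refine Finset.sum_congr rfl fun q _ => ?_
    rw [map_mul, Complex.conj_conj, Complex.conj_ofReal]
  set G : ℤ → ℝ := fun d => Real.cos (2 * π * j.val * d / n) with hGdef
  have hG : ∀ d : ℤ, G (-d) = G d := by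
    intro d
    simp only [hGdef]
    rw [← Real.cos_neg (2 * π * j.val * d / n)]
    congr 1
    push_cast
    ring
  have hcos : ∀ p q : ℕ, ((starRingEnd ℂ) (ζ ^ (j.val * p)) * ζ ^ (j.val * q)).re
      = G ((p : ℤ) - q) := by
    intro p q
    rw [hζpow, hζpow, ← Complex.exp_conj]
    have h1 : ∀ x : ℝ, (starRingEnd ℂ) ((x : ℂ) * Complex.I) = ((-x : ℝ) : ℂ) * Complex.I := by
      intro x; rw [map_mul, Complex.conj_ofReal, Complex.conj_I]; push_cast; ring
    rw [h1, ← Complex.exp_add]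
    have h2 : ((-(2 * π * ((j.val * p : ℕ) : ℝ) / n) : ℝ) : ℂ) * Complex.I
          + (((2 * π * ((j.val * q : ℕ) : ℝ) / n) : ℝ) : ℂ) * Complex.I
        = (((2 * π * j.val * q / n - 2 * π * j.val * p / n) : ℝ) : ℂ) * Complex.I := by
      push_cast; ring
    rw [h2, Complex.exp_ofReal_mul_I_re]
    have h4 : 2 * π * (j.val : ℝ) * q / n - 2 * π * (j.val : ℝ) * p / n
        = -(2 * π * (j.val : ℝ) * ((((p : ℤ) - q) : ℤ) : ℝ) / n) := by
      push_cast; ring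
    rw [h4, Real.cos_neg]
  -- real part of |μ|²
  have habs2 : ‖μ‖ ^ 2
      = ∑ p ∈ range T, ∑ q ∈ range T, F p * F q * G ((p : ℤ) - q) := by
    have hmc : ‖μ‖ ^ 2 = (μ * (starRingEnd ℂ) μ).re := by
      rw [Complex.mul_conj, Complex.ofReal_re, Complex.sq_norm]
    rw [hmc, hconjμ, hμT, Finset.sum_mul_sum, Complex.re_sum]
    refine Finset.sum_congr rfl fun p _ => ?_
    rw [Complex.re_sum]
    refine Finset.sum_congr rfl fun q _ => ?_
    have h3 : (F p : ℂ) * (starRingEnd ℂ) (ζ ^ (j.val * p)) * ((F q : ℂ) * ζ ^ (j.val * q))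
        = ((F p * F q : ℝ) : ℂ) * ((starRingEnd ℂ) (ζ ^ (j.val * p)) * ζ ^ (j.val * q)) := by
      push_cast; ring
    rw [h3, Complex.re_ofReal_mul, hcos]
  rw [hsum, habs2, regroup' T F G hG]
  have hG0 : G 0 = 1 := by simp [hGdef]
  have hc0 : ∑ k ∈ range T, F k * F k = c 0 := by
    rw [hc 0 (by omega)]
    simp
  rw [hG0, hc0, mul_one]
  congr 1
  rw [mul_left_cancel_iff_of_pos (by norm_num : (0:ℝ) < 2)]
  refine Finset.sum_congr rfl fun i hi => ?_
  rw [Finset.mem_Icc] at hi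
  rw [hc i hi.2]
  congr 1
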